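/- In a bipartite graph where each vertex represents a good, if some agent's two allocated goods are identical copies of each other then those two vertices form an isolated edge; otherwise every vertex has exactly two neighbors (its bundle-partner and its identical copy), and these neighbors are distinct and non-adjacent. Consequently a proper 2-coloring exists, yielding a selection of exactly one good from each agent's 2-good bundle such that the selected goods form exactly one copy of each good type. -/
import Mathlib

lemma exists_transversal14 {V : Type*} [DecidableEq V] (p : V → V)
    (hp2 : ∀ g, p (p g) = g) (hpne : ∀ g, p g ≠ g) :
    ∀ (N : ℕ) (T : Finset V), T.card ≤ N →
      (∀ g ∈ T, p g ∈ T) →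
      ∀ c : V → V, (∀ g ∈ T, c g ∈ T) → (∀ g ∈ T, c (c g) = g) → (∀ g ∈ T, c g ≠ g) →
      ∃ S ⊆ T, (∀ g ∈ T, (g ∈ S ↔ p g ∉ S)) ∧ (∀ g ∈ T, (g ∈ S ↔ c g ∉ S)) := by
  intro N
  induction N with
  | zero =>
    intro T hT _ c _ _ _
    have : T = ∅ := Finset.card_eq_zero.mp (Nat.le_zero.mp hT)
    subst this
    exact ⟨∅, by simp, by simp, by simp⟩
  | succ N ih =>
    intro T hT hTp c hTc hc2 hcne
    rcases T.eq_empty_or_nonempty with rfl | ⟨a, ha⟩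
    · exact ⟨∅, by simp, by simp, by simp⟩
    obtain ⟨b, hbdef⟩ : ∃ b, b = p a := ⟨p a, rfl⟩
    have hbT : b ∈ T := hbdef ▸ hTp a ha
    have hba : b ≠ a := hbdef ▸ hpne a
    have hpa : p a = b := hbdef.symm
    have hpb : p b = a := by rw [hbdef, hp2]
    have hmemT' : ∀ x, x ∈ T \ {a, b} ↔ x ∈ T ∧ x ≠ a ∧ x ≠ b := by
      intro x; simp [Finset.mem_sdiff, and_assoc]
    have hsub : T \ {a, b} ⊆ T := Finset.sdiff_subset
    have hcard' : (T \ {a, b}).card ≤ N := by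
      have hlt : (T \ {a, b}).card < T.card := Finset.card_lt_card
        ((Finset.ssubset_iff_of_subset hsub).mpr ⟨a, ha, by simp [hmemT']⟩)
      omega
    have hT'p : ∀ g ∈ T \ {a, b}, p g ∈ T \ {a, b} := by
      intro g hg
      rw [hmemT'] at hg ⊢
      refine ⟨hTp g hg.1, fun h => hg.2.2 ?_, fun h => hg.2.1 ?_⟩
      · rw [← hp2 g, h, hpa]
      · rw [← hp2 g, h, hpb]
    by_cases hcase : c a = b
    · -- isolated pair {a, b}
      have hcb : c b = a := by rw [← hcase, hc2 a ha]
      have hT'c : ∀ g ∈ T \ {a, b}, c g ∈ T \ {a, b} := by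
        intro g hg
        rw [hmemT'] at hg ⊢
        refine ⟨hTc g hg.1, fun h => hg.2.2 ?_, fun h => hg.2.1 ?_⟩
        · rw [← hc2 g hg.1, h, hcase]
        · rw [← hc2 g hg.1, h, hcb]
      obtain ⟨S', hS'sub, hS'p, hS'c⟩ := ih (T \ {a, b}) hcard' hT'p c hT'c
        (fun g hg => hc2 g (hsub hg)) (fun g hg => hcne g (hsub hg))
      have haS' : a ∉ S' := fun h => ((hmemT' a).mp (hS'sub h)).2.1 rfl
      have hbS' : b ∉ S' := fun h => ((hmemT' b).mp (hS'sub h)).2.2 rfl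
      have haS : a ∈ insert a S' := Finset.mem_insert_self a S'
      have hbS : b ∉ insert a S' := by
        rw [Finset.mem_insert]; rintro (h | h); exact hba h; exact hbS' h
      refine ⟨insert a S', Finset.insert_subset ha (hS'sub.trans hsub), ?_, ?_⟩
      · intro g hg
        by_cases hga : g = a
        · subst hga; rw [hpa]; simp [haS, hbS]
        · by_cases hgb : g = b
          · subst hgb; rw [hpb]; simp [haS, hbS]
          · have hgT' : g ∈ T \ {a, b} := (hmemT' g).mpr ⟨hg, hga, hgb⟩
            have hpga : p g ≠ a := ((hmemT' _).mp (hT'p g hgT')).2.1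
            rw [Finset.mem_insert, Finset.mem_insert]
            simp only [hga, hpga, false_or]
            exact hS'p g hgT'
      · intro g hg
        by_cases hga : g = a
        · subst hga; rw [hcase]; simp [haS, hbS]
        · by_cases hgb : g = b
          · subst hgb; rw [hcb]; simp [haS, hbS]
          · have hgT' : g ∈ T \ {a, b} := (hmemT' g).mpr ⟨hg, hga, hgb⟩
            have hcga : c g ≠ a := ((hmemT' _).mp (hT'c g hgT')).2.1
            rw [Finset.mem_insert, Finset.mem_insert]
            simp only [hga, hcga, false_or]
            exact hS'c g hgT'
    · -- general case: contract
      obtain ⟨a', ha'def⟩ : ∃ x, x = c a := ⟨c a, rfl⟩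
      obtain ⟨b', hb'def⟩ : ∃ x, x = c b := ⟨c b, rfl⟩
      have hca : c a = a' := ha'def.symm
      have hcb : c b = b' := hb'def.symm
      have hca' : c a' = a := by rw [ha'def, hc2 a ha]
      have hcb' : c b' = b := by rw [hb'def, hc2 b hbT]
      have ha'T : a' ∈ T := ha'def ▸ hTc a ha
      have hb'T : b' ∈ T := hb'def ▸ hTc b hbT
      have ha'a : a' ≠ a := ha'def ▸ hcne a ha
      have hb'b : b' ≠ b := hb'def ▸ hcne b hbT
      have ha'b : a' ≠ b := fun h => hcase (hca.trans h)
      have hb'a : b' ≠ a := fun h => hcase (by rw [← h, hcb'])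
      have ha'b' : a' ≠ b' := fun h => hba (by rw [← hca', ← hcb', h])
      have ha'T' : a' ∈ T \ {a, b} := (hmemT' a').mpr ⟨ha'T, ha'a, ha'b⟩
      have hb'T' : b' ∈ T \ {a, b} := (hmemT' b').mpr ⟨hb'T, hb'a, hb'b⟩
      -- modified involution
      obtain ⟨c', hc'def⟩ : ∃ c' : V → V,
          c' = fun g => if g = a' then b' else if g = b' then a' else c g :=
        ⟨_, rfl⟩
      have hc'a' : c' a' = b' := by rw [hc'def]; simp
      have hc'b' : c' b' = a' := by rw [hc'def]; simp [ha'b'.symm]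
      have hc'other : ∀ g, g ≠ a' → g ≠ b' → c' g = c g := by
        intro g h1 h2; rw [hc'def]; simp [h1, h2]
      -- for g ∈ T', g ≠ a', b' : c g avoids a, b, a', b'
      have hkey : ∀ g ∈ T \ {a, b}, g ≠ a' → g ≠ b' →
          c g ∈ T \ {a, b} ∧ c g ≠ a' ∧ c g ≠ b' := by
        intro g hg h1 h2
        rw [hmemT'] at hg
        refine ⟨(hmemT' _).mpr ⟨hTc g hg.1, fun h => h1 ?_, fun h => h2 ?_⟩,
          fun h => hg.2.1 ?_, fun h => hg.2.2 ?_⟩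
        · rw [← hc2 g hg.1, h, hca]
        · rw [← hc2 g hg.1, h, hcb]
        · rw [← hc2 g hg.1, h, hca']
        · rw [← hc2 g hg.1, h, hcb']
      have hT'c : ∀ g ∈ T \ {a, b}, c' g ∈ T \ {a, b} := by
        intro g hg
        by_cases h1 : g = a'
        · subst h1; rw [hc'a']; exact hb'T'
        · by_cases h2 : g = b'
          · subst h2; rw [hc'b']; exact ha'T'
          · rw [hc'other g h1 h2]; exact (hkey g hg h1 h2).1
      have hc'2 : ∀ g ∈ T \ {a, b}, c' (c' g) = g := by
        intro g hg
        by_cases h1 : g = a'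
        · subst h1; rw [hc'a', hc'b']
        · by_cases h2 : g = b'
          · subst h2; rw [hc'b', hc'a']
          · obtain ⟨hm, k1, k2⟩ := hkey g hg h1 h2
            rw [hc'other g h1 h2, hc'other (c g) k1 k2, hc2 g (hsub hg)]
      have hc'ne : ∀ g ∈ T \ {a, b}, c' g ≠ g := by
        intro g hg
        by_cases h1 : g = a'
        · subst h1; rw [hc'a']; exact ha'b'.symm
        · by_cases h2 : g = b'
          · subst h2; rw [hc'b']; exact ha'b'
          · rw [hc'other g h1 h2]; exact hcne g (hsub hg)
      obtain ⟨S', hS'sub, hS'p, hS'c⟩ := ih (T \ {a, b}) hcard' hT'p c' hT'c hc'2 hc'ne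
      have haS' : a ∉ S' := fun h => ((hmemT' a).mp (hS'sub h)).2.1 rfl
      have hbS' : b ∉ S' := fun h => ((hmemT' b).mp (hS'sub h)).2.2 rfl
      have hxor : a' ∈ S' ↔ b' ∉ S' := by
        have := hS'c a' ha'T'; rwa [hc'a'] at this
      -- helper to build final S = insert x S' where x ∈ {a, b}
      by_cases ha'S : a' ∈ S'
      · -- pick b
        have hb'S' : b' ∉ S' := hxor.mp ha'S
        have hbS : b ∈ insert b S' := Finset.mem_insert_self b S'
        have haS : a ∉ insert b S' := by
          rw [Finset.mem_insert]; rintro (h | h); exact hba h.symm; exact haS' h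
        have ha'S2 : a' ∈ insert b S' := Finset.mem_insert_of_mem ha'S
        have hb'S : b' ∉ insert b S' := by
          rw [Finset.mem_insert]; rintro (h | h); exact hb'b h; exact hb'S' h
        refine ⟨insert b S', Finset.insert_subset hbT (hS'sub.trans hsub), ?_, ?_⟩
        · intro g hg
          by_cases hga : g = a
          · subst hga; rw [hpa]; simp [haS, hbS]
          · by_cases hgb : g = b
            · subst hgb; rw [hpb]; simp [haS, hbS]
            · have hgT' : g ∈ T \ {a, b} := (hmemT' g).mpr ⟨hg, hga, hgb⟩
              have hpgb : p g ≠ b := ((hmemT' _).mp (hT'p g hgT')).2.2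
              rw [Finset.mem_insert, Finset.mem_insert]
              simp only [hgb, hpgb, false_or]
              exact hS'p g hgT'
        · intro g hg
          by_cases hga : g = a
          · subst hga; rw [hca]; simp [haS, ha'S2]
          · by_cases hgb : g = b
            · subst hgb; rw [hcb]; simp [hbS, hb'S]
            · by_cases h1 : g = a'
              · subst h1; rw [hca']; simp [ha'S2, haS]
              · by_cases h2 : g = b'
                · subst h2; rw [hcb']; simp [hb'S, hbS]
                · have hgT' : g ∈ T \ {a, b} := (hmemT' g).mpr ⟨hg, hga, hgb⟩
                  obtain ⟨hm, k1, k2⟩ := hkey g hgT' h1 h2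
                  have hcgb : c g ≠ b := ((hmemT' _).mp hm).2.2
                  rw [Finset.mem_insert, Finset.mem_insert]
                  simp only [hgb, hcgb, false_or]
                  have := hS'c g hgT'
                  rwa [hc'other g h1 h2] at this
      · -- pick a
        have hb'S' : b' ∈ S' := by_contra fun h => ha'S (hxor.mpr h)
        have haS : a ∈ insert a S' := Finset.mem_insert_self a S'
        have hbS : b ∉ insert a S' := by
          rw [Finset.mem_insert]; rintro (h | h); exact hba h; exact hbS' h
        have hb'S2 : b' ∈ insert a S' := Finset.mem_insert_of_mem hb'S'
        have ha'S2 : a' ∉ insert a S' := by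
          rw [Finset.mem_insert]; rintro (h | h); exact ha'a h; exact ha'S h
        refine ⟨insert a S', Finset.insert_subset ha (hS'sub.trans hsub), ?_, ?_⟩
        · intro g hg
          by_cases hga : g = a
          · subst hga; rw [hpa]; simp [haS, hbS]
          · by_cases hgb : g = b
            · subst hgb; rw [hpb]; simp [haS, hbS]
            · have hgT' : g ∈ T \ {a, b} := (hmemT' g).mpr ⟨hg, hga, hgb⟩
              have hpga : p g ≠ a := ((hmemT' _).mp (hT'p g hgT')).2.1
              rw [Finset.mem_insert, Finset.mem_insert]
              simp only [hga, hpga, false_or]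
              exact hS'p g hgT'
        · intro g hg
          by_cases hga : g = a
          · subst hga; rw [hca]; simp [haS, ha'S2]
          · by_cases hgb : g = b
            · subst hgb; rw [hcb]; simp [hbS, hb'S2]
            · by_cases h1 : g = a'
              · subst h1; rw [hca']; simp [ha'S2, haS]
              · by_cases h2 : g = b'
                · subst h2; rw [hcb']; simp [hb'S2, hbS]
                · have hgT' : g ∈ T \ {a, b} := (hmemT' g).mpr ⟨hg, hga, hgb⟩
                  obtain ⟨hm, k1, k2⟩ := hkey g hgT' h1 h2
                  have hcga : c g ≠ a := ((hmemT' _).mp hm).2.1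
                  rw [Finset.mem_insert, Finset.mem_insert]
                  simp only [hga, hcga, false_or]
                  have := hS'c g hgT'
                  rwa [hc'other g h1 h2] at this

lemma fiber_pair14 {V : Type*} [Fintype V] [DecidableEq V] {n : ℕ}
    (bundle : V → Fin n)
    (hbundle : ∀ i : Fin n, (Finset.univ.filter (fun g => bundle g = i)).card = 2)
    {a b : V} (hab : a ≠ b) (hb : bundle b = bundle a) :
    ∀ x, bundle x = bundle a → x = a ∨ x = b := by
  intro x hx
  have hsub : ({a, b} : Finset V) ⊆ Finset.univ.filter (fun g => bundle g = bundle a) := by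
    intro y hy
    rw [Finset.mem_insert, Finset.mem_singleton] at hy
    rcases hy with rfl | rfl <;> simp [hb]
  have hcard : ({a, b} : Finset V).card = 2 := by
    rw [Finset.card_insert_of_notMem (by simpa), Finset.card_singleton]
  have heq := Finset.eq_of_subset_of_card_le hsub (by rw [hbundle, hcard])
  have hx' : x ∈ ({a, b} : Finset V) := by
    rw [heq]; simp [hx]
  rw [Finset.mem_insert, Finset.mem_singleton] at hx'
  exact hx'



/-- In the bipartite goods graph: if an agent's two goods are identical copies
of each other they form an isolated edge; otherwise every vertex has exactly
two neighbors (bundle-partner and identical copy). Consequently there is a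
selection of exactly one good per agent containing exactly one copy of each
good type. -/
theorem stmt14 {V : Type*} [Fintype V] [DecidableEq V] (n : ℕ)
    (bundle : V → Fin n) (copy : V → V)
    (hcard : Fintype.card V = 2 * n)
    (hbundle : ∀ i : Fin n, (Finset.univ.filter (fun g => bundle g = i)).card = 2)
    (hinv : Function.Involutive copy) (hnofix : ∀ g, copy g ≠ g)
    (H : SimpleGraph V) [DecidableRel H.Adj]
    (hAdj : ∀ g₁ g₂, H.Adj g₁ g₂ ↔
      g₁ ≠ g₂ ∧ (bundle g₁ = bundle g₂ ∨ copy g₁ = g₂)) :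
    (∀ g, bundle (copy g) = bundle g → H.neighborFinset g = {copy g}) ∧
    (∀ g, bundle (copy g) ≠ bundle g → (H.neighborFinset g).card = 2) ∧
    ∃ S : Finset V,
      (∀ i : Fin n, (S.filter (fun g => bundle g = i)).card = 1) ∧
      (∀ g, g ∈ S ↔ copy g ∉ S) := by
    -- the bundle-partner function
  have hex : ∀ g : V, ∃ q, q ≠ g ∧ bundle q = bundle g := by
    intro g
    have hg : g ∈ Finset.univ.filter (fun x => bundle x = bundle g) := by simp
    have h1 : ((Finset.univ.filter (fun x => bundle x = bundle g)).erase g).card = 1 := by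
      rw [Finset.card_erase_of_mem hg, hbundle]
    obtain ⟨q, hq⟩ := Finset.card_pos.mp (by rw [h1]; norm_num)
    rw [Finset.mem_erase, Finset.mem_filter] at hq
    exact ⟨q, hq.1, hq.2.2⟩
  choose p hp1 hp2 using hex
  have hp2' : ∀ g, p (p g) = g := by
    intro g
    have := fiber_pair14 bundle hbundle (a := g) (b := p g) (hp1 g).symm (hp2 g)
      (p (p g)) (by rw [hp2 (p g), hp2 g])
    rcases this with h | h
    · exact h
    · exact absurd h (hp1 (p g))
  refine ⟨?_, ?_, ?_⟩
  · -- isolated edge case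
    intro g hg
    ext x
    rw [SimpleGraph.mem_neighborFinset, hAdj, Finset.mem_singleton]
    constructor
    · rintro ⟨hne, h | h⟩
      · rcases fiber_pair14 bundle hbundle (a := g) (b := copy g)
          (fun h' => hnofix g h'.symm) hg x h.symm with h' | h'
        · exact absurd h'.symm hne
        · exact h'
      · exact h.symm
    · rintro rfl
      exact ⟨fun h => hnofix g h.symm, Or.inr rfl⟩
  · -- degree-two case
    intro g hg
    have hne : p g ≠ copy g := fun h => hg (by rw [← h, hp2 g])
    have heq : H.neighborFinset g = {p g, copy g} := by
      ext x
      rw [SimpleGraph.mem_neighborFinset, hAdj, Finset.mem_insert, Finset.mem_singleton]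
      constructor
      · rintro ⟨hxne, h | h⟩
        · rcases fiber_pair14 bundle hbundle (a := g) (b := p g)
            (hp1 g).symm (hp2 g) x h.symm with h' | h'
          · exact absurd h'.symm hxne
          · exact Or.inl h'
        · exact Or.inr h.symm
      · rintro (rfl | rfl)
        · exact ⟨(hp1 g).symm, Or.inl (hp2 g).symm⟩
        · exact ⟨fun h => hnofix g h.symm, Or.inr rfl⟩
    rw [heq, Finset.card_insert_of_notMem (by simpa), Finset.card_singleton]
  · -- the transversal
    obtain ⟨S, hSsub, hSp, hSc⟩ := exists_transversal14 p hp2' hp1 (Fintype.card V)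
      Finset.univ (by simp) (by simp) copy (by simp)
      (fun g _ => hinv g) (fun g _ => hnofix g)
    refine ⟨S, ?_, fun g => hSc g (Finset.mem_univ g)⟩
    intro i
    obtain ⟨a, haf⟩ := Finset.card_pos.mp
      (by rw [hbundle i]; norm_num : 0 < (Finset.univ.filter (fun g => bundle g = i)).card)
    rw [Finset.mem_filter] at haf
    have hai : bundle a = i := haf.2
    have honly : ∀ x, bundle x = i → x = a ∨ x = p a := by
      intro x hx
      exact fiber_pair14 bundle hbundle (a := a) (b := p a) (hp1 a).symm (hp2 a) x
        (by rw [hx, hai])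
    have hxor := hSp a (Finset.mem_univ a)
    by_cases haS : a ∈ S
    · have : S.filter (fun g => bundle g = i) = {a} := by
        ext x
        rw [Finset.mem_filter, Finset.mem_singleton]
        constructor
        · rintro ⟨hxS, hxi⟩
          rcases honly x hxi with rfl | rfl
          · rfl
          · exact absurd hxS (hxor.mp haS)
        · rintro rfl; exact ⟨haS, hai⟩
      rw [this, Finset.card_singleton]
    · have hpaS : p a ∈ S := by_contra fun h => haS (hxor.mpr h)
      have : S.filter (fun g => bundle g = i) = {p a} := by
        ext x
        rw [Finset.mem_filter, Finset.mem_singleton]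
        constructor
        · rintro ⟨hxS, hxi⟩
          rcases honly x hxi with rfl | rfl
          · exact absurd hxS haS
          · rfl
        · rintro rfl; exact ⟨hpaS, by rw [hp2 a, hai]⟩
      rw [this, Finset.card_singleton]
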